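/- arXiv:1712.05742 — 2 statements merged into one kernel-verified Lean document; each statement's English description precedes it below -/
import Mathlib

section
/- Let F be a field, and let A, B be m×s matrices and C, D be n×s matrices over F such that 2·rank[A B] > 3s and 2·rank[C D] > 3s, where [A B] and [C D] denote the concatenated m×2s and n×2s matrices. Then for every (t₁,t₂) ∈ F² with t₁ ≠ 0, the matrix t₁(ACᵀ + BDᵀ) + t₂·BCᵀ has rank strictly greater than s. -/
open Matrix

lemma sylvester_lm {F V₁ V₂ V₃ : Type*} [Field F] [AddCommGroup V₁] [Module F V₁]
    [AddCommGroup V₂] [Module F V₂] [AddCommGroup V₃] [Module F V₃]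
    [FiniteDimensional F V₂]
    (f : V₂ →ₗ[F] V₃) (g : V₁ →ₗ[F] V₂) :
    Module.finrank F (LinearMap.range f) + Module.finrank F (LinearMap.range g)
      ≤ Module.finrank F (LinearMap.range (f ∘ₗ g)) + Module.finrank F V₂ := by
  set f' := f ∘ₗ (LinearMap.range g).subtype with hf'
  have hrange : LinearMap.range f' = LinearMap.range (f ∘ₗ g) := by
    rw [hf', LinearMap.range_comp, LinearMap.range_comp, Submodule.range_subtype]
  have h1 : Module.finrank F (LinearMap.range f') + Module.finrank F (LinearMap.ker f')
      = Module.finrank F (LinearMap.range g) :=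
    LinearMap.finrank_range_add_finrank_ker f'
  have h2 : Module.finrank F (LinearMap.ker f') ≤ Module.finrank F (LinearMap.ker f) := by
    have hmap : (LinearMap.ker f').map (LinearMap.range g).subtype ≤ LinearMap.ker f := by
      rintro x ⟨y, hy, rfl⟩
      simpa [hf'] using hy
    have heq : Module.finrank F (LinearMap.ker f')
        = Module.finrank F ((LinearMap.ker f').map (LinearMap.range g).subtype) :=
      LinearEquiv.finrank_eq (Submodule.equivMapOfInjective _
        (Submodule.injective_subtype _) _)
    rw [heq]
    exact Submodule.finrank_mono hmap
  have h3 : Module.finrank F (LinearMap.range f) + Module.finrank F (LinearMap.ker f)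
      = Module.finrank F V₂ := LinearMap.finrank_range_add_finrank_ker f
  rw [← hrange]
  omega

lemma sylvester_mat {F : Type*} [Field F] {m k n : Type*} [Fintype m] [Fintype k] [Fintype n]
    (X : Matrix m k F) (Y : Matrix k n F) :
    X.rank + Y.rank ≤ (X * Y).rank + Fintype.card k := by
  rw [Matrix.rank, Matrix.rank, Matrix.rank, Matrix.mulVecLin_mul]
  simpa [Module.finrank_fintype_fun_eq_card] using
    sylvester_lm (X.mulVecLin) (Y.mulVecLin)

/-- If `2 rank [A B] > 3s` and `2 rank [C D] > 3s`, then for every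
`(t₁, t₂)` with `t₁ ≠ 0`, the matrix `t₁ (A Cᵀ + B Dᵀ) + t₂ B Cᵀ` has rank
strictly greater than `s`. -/
theorem rank_combination_gt {F : Type*} [Field F] {m n s : ℕ}
    (A B : Matrix (Fin m) (Fin s) F) (C D : Matrix (Fin n) (Fin s) F)
    (hAB : 3 * s < 2 * (Matrix.fromCols A B).rank)
    (hCD : 3 * s < 2 * (Matrix.fromCols C D).rank) :
    ∀ t₁ t₂ : F, t₁ ≠ 0 →
      s < (t₁ • (A * Cᵀ + B * Dᵀ) + t₂ • (B * Cᵀ)).rank := by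
  intro t₁ t₂ ht₁
  set P : Matrix (Fin s ⊕ Fin s) (Fin s ⊕ Fin s) F :=
    fromBlocks (t₁ • 1) 0 (t₂ • 1) (t₁ • 1) with hP
  have hdet : IsUnit P.det := by
    rw [hP, Matrix.det_fromBlocks_zero₁₂]
    simp only [Matrix.det_smul, Matrix.det_one, mul_one]
    simpa using ((ht₁.isUnit.pow s).mul (ht₁.isUnit.pow s))
  set X : Matrix (Fin m) (Fin s ⊕ Fin s) F := fromCols A B * P with hX
  have hXrank : X.rank = (fromCols A B).rank :=
    Matrix.rank_mul_eq_left_of_isUnit_det P (fromCols A B) hdet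
  have hkey : X * (fromCols C D)ᵀ
      = t₁ • (A * Cᵀ + B * Dᵀ) + t₂ • (B * Cᵀ) := by
    rw [hX, hP, transpose_fromCols, fromCols_mul_fromBlocks, Matrix.mul_zero,
      fromCols_mul_fromRows]
    simp only [Matrix.mul_smul, Matrix.smul_mul, Matrix.mul_one, zero_add, smul_add]
    simp only [Matrix.add_mul, Matrix.smul_mul]
    abel
  have hYrank : ((fromCols C D)ᵀ).rank = (fromCols C D).rank :=
    Matrix.rank_transpose _
  have hsyl := sylvester_mat X (fromCols C D)ᵀ
  rw [hkey, hXrank, hYrank] at hsyl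
  have hcard : Fintype.card (Fin s ⊕ Fin s) = 2 * s := by
    simp [Fintype.card_sum, two_mul]
  rw [hcard] at hsyl
  omega
end

section
/- Let F be ℝ or ℂ, and let A, B be arbitrary m×s matrices and C, D be arbitrary n×s matrices over F. Then the pencil (ACᵀ + BDᵀ, BCᵀ) lies in the closure (in the norm topology) of the set B_{s,s} of m×n pencils: explicitly, the pencils P_n = (n(B + A/n)(C + D/n)ᵀ − n·BCᵀ, (B + A/n)(C + D/n)ᵀ) belong to B_{s,s} and converge to (ACᵀ + BDᵀ, BCᵀ) as n → ∞. -/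
open Matrix

/-- `(A', B')` lies in the orbit of the pencil `(A, B)` under the action of
`GL_m(F) × GL_n(F) × GL_2(F)` given by
`(P, U, T) · (A, B) = (P (t₁₁ A + t₁₂ B) Uᵀ, P (t₂₁ A + t₂₂ B) Uᵀ)`. -/
def InOrbit {F : Type*} [Field F] {m n : ℕ}
    (A B A' B' : Matrix (Fin m) (Fin n) F) : Prop :=
  ∃ (P : Matrix (Fin m) (Fin m) F) (U : Matrix (Fin n) (Fin n) F)
    (T : Matrix (Fin 2) (Fin 2) F),
    IsUnit P.det ∧ IsUnit U.det ∧ IsUnit T.det ∧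
    A' = P * (T 0 0 • A + T 0 1 • B) * U.transpose ∧
    B' = P * (T 1 0 • A + T 1 1 • B) * U.transpose

/-- The pencil `(A, B)` belongs to `B_{r,s}`: some pencil in its orbit has
first coefficient of rank `≤ r` and second coefficient of rank `≤ s`. -/
def InBset {F : Type*} [Field F] {m n : ℕ} (r s : ℕ)
    (A B : Matrix (Fin m) (Fin n) F) : Prop :=
  ∃ A' B', InOrbit A B A' B' ∧ A'.rank ≤ r ∧ B'.rank ≤ s


/-- Squared Frobenius norm of a matrix. -/
noncomputable def frobSq {F : Type*} [RCLike F] {m n : ℕ}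
    (A : Matrix (Fin m) (Fin n) F) : ℝ :=
  ∑ i, ∑ j, ‖A i j‖ ^ 2

/-- Distance between two pencils induced by the norm
`‖(A, B)‖ = √(‖A‖_F² + ‖B‖_F²)`. -/
noncomputable def pdist {F : Type*} [RCLike F] {m n : ℕ}
    (p q : Matrix (Fin m) (Fin n) F × Matrix (Fin m) (Fin n) F) : ℝ :=
  Real.sqrt (frobSq (p.1 - q.1) + frobSq (p.2 - q.2))

lemma frobSq_continuous {F : Type*} [RCLike F] {m n : ℕ} :
    Continuous (frobSq (F := F) (m := m) (n := n)) := by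
  unfold frobSq
  refine continuous_finset_sum _ fun i _ => continuous_finset_sum _ fun j _ => ?_
  exact ((continuous_apply j).comp (continuous_apply i)).norm.pow 2

lemma frobSq_zero {F : Type*} [RCLike F] {m n : ℕ} :
    frobSq (0 : Matrix (Fin m) (Fin n) F) = 0 := by
  simp [frobSq]

lemma inv_cast_tendsto (F : Type*) [RCLike F] :
    Filter.Tendsto (fun N : ℕ => ((N : F))⁻¹) Filter.atTop (nhds 0) := by
  have h : (fun N : ℕ => ((N : F))⁻¹)
      = (fun x : ℝ => (x : F)) ∘ (fun N : ℕ => ((N : ℝ))⁻¹) := by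
    funext N
    simp [Function.comp]
  rw [h]
  have := RCLike.continuous_ofReal (K := F)
  have h2 : Filter.Tendsto (fun N : ℕ => ((N : ℝ))⁻¹) Filter.atTop (nhds 0) :=
    tendsto_inv_atTop_zero.comp tendsto_natCast_atTop_atTop
  simpa using (this.tendsto 0).comp h2

/-- The pencils
`P_N = (N (B + A/N)(C + D/N)ᵀ − N B Cᵀ, (B + A/N)(C + D/N)ᵀ)` belong to
`B_{s,s}` and converge to `(A Cᵀ + B Dᵀ, B Cᵀ)` as `N → ∞`; hence
`(A Cᵀ + B Dᵀ, B Cᵀ)` lies in the closure of `B_{s,s}` in the norm topology. -/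
theorem pencil_in_closure_Bss {F : Type*} [RCLike F] {m n s : ℕ}
    (A B : Matrix (Fin m) (Fin s) F) (C D : Matrix (Fin n) (Fin s) F) :
    (∀ N : ℕ, 0 < N →
      InBset s s
        ((N : F) • ((B + (N : F)⁻¹ • A) * (C + (N : F)⁻¹ • D)ᵀ) - (N : F) • (B * Cᵀ))
        ((B + (N : F)⁻¹ • A) * (C + (N : F)⁻¹ • D)ᵀ)) ∧
    Filter.Tendsto (fun N : ℕ =>
        pdist
          ((N : F) • ((B + (N : F)⁻¹ • A) * (C + (N : F)⁻¹ • D)ᵀ) - (N : F) • (B * Cᵀ),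
            (B + (N : F)⁻¹ • A) * (C + (N : F)⁻¹ • D)ᵀ)
          (A * Cᵀ + B * Dᵀ, B * Cᵀ))
      Filter.atTop (nhds 0) := by
  -- expansion of the product
  have hM : ∀ N : ℕ, (B + (N : F)⁻¹ • A) * (C + (N : F)⁻¹ • D)ᵀ
      = B * Cᵀ + (N : F)⁻¹ • (B * Dᵀ) + (N : F)⁻¹ • (A * Cᵀ)
        + ((N : F)⁻¹ * (N : F)⁻¹) • (A * Dᵀ) := by
    intro N
    simp only [transpose_add, transpose_smul, Matrix.mul_add, Matrix.add_mul,
      Matrix.smul_mul, Matrix.mul_smul, smul_smul, smul_add]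
    abel
  constructor
  · intro N hN
    have hN0 : (N : F) ≠ 0 := Nat.cast_ne_zero.mpr hN.ne'
    refine ⟨(-B) * Cᵀ, (B + (N : F)⁻¹ • A) * (C + (N : F)⁻¹ • D)ᵀ,
      ⟨1, 1, !![(N : F)⁻¹, -1; 0, 1], ?_, ?_, ?_, ?_, ?_⟩, ?_, ?_⟩
    · simp
    · simp
    · rw [Matrix.det_fin_two_of]
      simpa using (IsUnit.inv (isUnit_iff_ne_zero.mpr hN0))
    · simp only [Matrix.one_mul, transpose_one, Matrix.mul_one,
        Matrix.cons_val', Matrix.cons_val_zero, Matrix.empty_val',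
        Matrix.cons_val_fin_one, Matrix.cons_val_one, Matrix.head_cons,
        Matrix.head_fin_const, Matrix.of_apply]
      simp only [smul_sub, smul_smul, inv_mul_cancel₀ hN0, one_smul, neg_one_smul,
        Matrix.neg_mul]
      abel
    · simp
    · exact le_trans (Matrix.rank_mul_le_left _ _)
        (le_trans (Matrix.rank_le_card_width _) (by simp))
    · exact le_trans (Matrix.rank_mul_le_left _ _)
        (le_trans (Matrix.rank_le_card_width _) (by simp))
  · -- convergence
    set L : Matrix (Fin m) (Fin n) F × Matrix (Fin m) (Fin n) F :=
      (A * Cᵀ + B * Dᵀ, B * Cᵀ) with hL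
    have hc := inv_cast_tendsto F
    have h1 : Filter.Tendsto (fun N : ℕ =>
        ((N : F) • ((B + (N : F)⁻¹ • A) * (C + (N : F)⁻¹ • D)ᵀ) - (N : F) • (B * Cᵀ),
          (B + (N : F)⁻¹ • A) * (C + (N : F)⁻¹ • D)ᵀ)) Filter.atTop (nhds L) := by
      have e1 : ∀ᶠ N : ℕ in Filter.atTop,
          (N : F) • ((B + (N : F)⁻¹ • A) * (C + (N : F)⁻¹ • D)ᵀ) - (N : F) • (B * Cᵀ)
            = A * Cᵀ + B * Dᵀ + (N : F)⁻¹ • (A * Dᵀ) := by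
        filter_upwards [Filter.eventually_ge_atTop 1] with N hN
        have hN0 : (N : F) ≠ 0 := Nat.cast_ne_zero.mpr (by omega)
        rw [hM N]
        simp only [smul_add, smul_smul, mul_inv_cancel₀ hN0, one_smul,
          ← mul_assoc, mul_inv_cancel₀ hN0, one_mul]
        abel
      have t1 : Filter.Tendsto (fun N : ℕ =>
          A * Cᵀ + B * Dᵀ + (N : F)⁻¹ • (A * Dᵀ)) Filter.atTop
          (nhds (A * Cᵀ + B * Dᵀ)) := by
        have := (tendsto_const_nhds (x := A * Cᵀ + B * Dᵀ)
          (f := Filter.atTop (α := ℕ))).add (hc.smul_const (A * Dᵀ))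
        simpa using this
      have t2 : Filter.Tendsto (fun N : ℕ =>
          (B + (N : F)⁻¹ • A) * (C + (N : F)⁻¹ • D)ᵀ) Filter.atTop
          (nhds (B * Cᵀ)) := by
        have : Filter.Tendsto (fun N : ℕ =>
            B * Cᵀ + (N : F)⁻¹ • (B * Dᵀ) + (N : F)⁻¹ • (A * Cᵀ)
              + ((N : F)⁻¹ * (N : F)⁻¹) • (A * Dᵀ)) Filter.atTop (nhds (B * Cᵀ)) := by
          have := ((tendsto_const_nhds (x := B * Cᵀ) (f := Filter.atTop (α := ℕ))).add
            (hc.smul_const (B * Dᵀ))).add (hc.smul_const (A * Cᵀ)) |>.add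
            ((hc.mul hc).smul_const (A * Dᵀ))
          simpa using this
        refine this.congr fun N => (hM N).symm
      exact Filter.Tendsto.prodMk_nhds
        (Filter.Tendsto.congr' (Filter.EventuallyEq.symm e1) t1) t2
    have hcont : Continuous (fun p : Matrix (Fin m) (Fin n) F × Matrix (Fin m) (Fin n) F
        => pdist p L) := by
      unfold pdist
      refine Real.continuous_sqrt.comp (Continuous.add ?_ ?_)
      · exact frobSq_continuous.comp (continuous_fst.sub continuous_const)
      · exact frobSq_continuous.comp (continuous_snd.sub continuous_const)
    have := (hcont.tendsto L).comp h1
    simpa [pdist, frobSq_zero, Function.comp_def] using this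
end
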